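/- Let Φ : M_n(ℂ) → M_n(ℂ) be a linear, positive, trace-preserving map, let ρ° be a state with Φ(ρ°) = ρ°, and let ε ∈ (0,1] be such that for every state ρ the Doeblin-type minorization Φ(ρ) ≥ ε·ρ° holds (i.e., Φ(ρ) − ε·ρ° is positive semidefinite). Then for every state ρ, ‖Φ(ρ) − ρ°‖₁ ≤ (1 − ε)·‖ρ − ρ°‖₁. -/

import Mathlib

open scoped ComplexOrder
open Matrix

/-- The trace norm of a matrix: `‖A‖₁ = Tr √(Aᴴ A)`.  For a Hermitian matrix this is
the sum of the absolute values of its eigenvalues. -/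
noncomputable def traceNorm {n : ℕ} (A : Matrix (Fin n) (Fin n) ℂ) : ℝ :=
  ((Matrix.posSemidef_conjTranspose_mul_self A).1.eigenvectorUnitary.1 *
    Matrix.diagonal (((↑) : ℝ → ℂ) ∘ (√·) ∘ (Matrix.posSemidef_conjTranspose_mul_self A).1.eigenvalues) *
    (star (Matrix.posSemidef_conjTranspose_mul_self A).1.eigenvectorUnitary : Matrix (Fin n) (Fin n) ℂ)).trace.re

section aux
variable {n : ℕ}

lemma frozen_sqrt_eq {M B : Matrix (Fin n) (Fin n) ℂ} (hM : M.IsHermitian)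
    (hB : B.PosSemidef) (hBB : B * B = M) :
    hM.eigenvectorUnitary.1 * Matrix.diagonal (((↑) : ℝ → ℂ) ∘ (√·) ∘ hM.eigenvalues) *
      (star hM.eigenvectorUnitary : Matrix (Fin n) (Fin n) ℂ) = B := by
  open scoped MatrixOrder in
  have hB0 : 0 ≤ B := Matrix.nonneg_iff_posSemidef.mpr hB
  open scoped MatrixOrder in
  have hM0 : 0 ≤ M := by
    rw [← hBB]
    have := Matrix.posSemidef_conjTranspose_mul_self B
    rw [hB.1.eq] at this
    exact Matrix.nonneg_iff_posSemidef.mpr this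
  open scoped MatrixOrder in
  have h1 : cfc Real.sqrt M = hM.eigenvectorUnitary.1 *
      Matrix.diagonal (((↑) : ℝ → ℂ) ∘ (√·) ∘ hM.eigenvalues) *
      (star hM.eigenvectorUnitary : Matrix (Fin n) (Fin n) ℂ) := by
    rw [hM.cfc_eq]; rfl
  open scoped MatrixOrder in
  rw [← h1, ← cfcₙ_eq_cfc, ← CFC.sqrt_eq_real_sqrt M hM0, CFC.sqrt_unique hBB hB0]

lemma psd_smul {A : Matrix (Fin n) (Fin n) ℂ} (hA : A.PosSemidef) {c : ℝ} (hc : 0 ≤ c) :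
    ((c : ℂ) • A).PosSemidef := by
  constructor
  · unfold Matrix.IsHermitian
    rw [conjTranspose_smul, hA.1.eq]
    simp
  · intro x
    exact (hA.smul (a := (c : ℂ)) (by exact_mod_cast hc)).2 x

lemma trace_conj (U : Matrix.unitaryGroup (Fin n) ℂ) (M : Matrix (Fin n) (Fin n) ℂ) :
    ((U : Matrix (Fin n) (Fin n) ℂ) * M * star (U : Matrix (Fin n) (Fin n) ℂ)).trace = M.trace := by
  rw [Matrix.trace_mul_cycle, Matrix.UnitaryGroup.star_mul_self, one_mul]

lemma diag_nonneg {M : Matrix (Fin n) (Fin n) ℂ} (hM : M.PosSemidef) (i : Fin n) :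
    0 ≤ M i i := by
  exact hM.diag_nonneg

lemma traceNorm_herm {Δ : Matrix (Fin n) (Fin n) ℂ} (h : Δ.IsHermitian) :
    traceNorm Δ = ∑ i, |h.eigenvalues i| := by
  set U : Matrix (Fin n) (Fin n) ℂ := (h.eigenvectorUnitary : Matrix (Fin n) (Fin n) ℂ)
  set B : Matrix (Fin n) (Fin n) ℂ :=
    U * Matrix.diagonal (fun i => ((|h.eigenvalues i| : ℝ) : ℂ)) * star U with hBdef
  have hUstar : star U = Uᴴ := rfl
  have hB : B.PosSemidef := by
    rw [hBdef, hUstar]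
    exact (Matrix.posSemidef_diagonal_iff.mpr fun i => by
      exact_mod_cast Complex.zero_le_real.mpr (abs_nonneg _)).mul_mul_conjTranspose_same U
  have hUU : star U * U = 1 := Matrix.UnitaryGroup.star_mul_self h.eigenvectorUnitary
  have hB2 : B ^ 2 = Δᴴ * Δ := by
    have hspec := h.spectral_theorem
    rw [pow_two, hBdef, h.eq]
    conv_rhs => rw [hspec, Unitary.conjStarAlgAut_apply]
    rw [show ∀ (D E : Matrix (Fin n) (Fin n) ℂ),
        (U * D * star U) * (U * E * star U) = U * (D * (star U * U) * E) * star U from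
        fun D E => by noncomm_ring, hUU]
    rw [show ∀ (D E : Matrix (Fin n) (Fin n) ℂ),
        (U * D * star U) * (U * E * star U) = U * (D * (star U * U) * E) * star U from
        fun D E => by noncomm_ring, hUU]
    simp only [mul_one, Matrix.diagonal_mul_diagonal]
    have hfun : (fun i => ((|h.eigenvalues i| : ℝ) : ℂ) * ((|h.eigenvalues i| : ℝ) : ℂ)) =
        fun i => ((RCLike.ofReal ∘ h.eigenvalues) i * (RCLike.ofReal ∘ h.eigenvalues) i : ℂ) := by
      funext i
      have habs : |h.eigenvalues i| * |h.eigenvalues i| = h.eigenvalues i * h.eigenvalues i :=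
        abs_mul_abs_self _
      simp only [Function.comp_apply, ← Complex.ofReal_mul, habs]
      push_cast
      rfl
    rw [hfun]
  have hsqrt := frozen_sqrt_eq (Matrix.posSemidef_conjTranspose_mul_self Δ).1 hB
    (by rw [← pow_two]; exact hB2)
  rw [traceNorm, hsqrt, hBdef, trace_conj h.eigenvectorUnitary, Matrix.trace_diagonal]
  simp [Complex.re_sum]

lemma trace_eq_sum_eigenvalues {Δ : Matrix (Fin n) (Fin n) ℂ} (h : Δ.IsHermitian) :
    Δ.trace = ∑ i, (h.eigenvalues i : ℂ) := by
  conv_lhs => rw [h.spectral_theorem, Unitary.conjStarAlgAut_apply]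
  rw [trace_conj h.eigenvectorUnitary, Matrix.trace_diagonal]
  rfl

lemma traceNorm_sub_psd_le {A B : Matrix (Fin n) (Fin n) ℂ}
    (hA : A.PosSemidef) (hB : B.PosSemidef) :
    traceNorm (A - B) ≤ A.trace.re + B.trace.re := by
  have hΔ : (A - B).IsHermitian := hA.1.sub hB.1
  rw [traceNorm_herm hΔ]
  set U : Matrix (Fin n) (Fin n) ℂ := (hΔ.eigenvectorUnitary : Matrix (Fin n) (Fin n) ℂ) with hU
  have hdiag : star U * (A - B) * U = Matrix.diagonal (RCLike.ofReal ∘ hΔ.eigenvalues) := by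
    have := hΔ.conjStarAlgAut_star_eigenvectorUnitary
    rw [Unitary.conjStarAlgAut_star_apply] at this
    exact this
  have hUU' : U * star U = 1 :=
    Matrix.mem_unitaryGroup_iff.mp hΔ.eigenvectorUnitary.2
  have hAU : (star U * A * U).PosSemidef := by
    have := hA.conjTranspose_mul_mul_same U
    exact this
  have hBU : (star U * B * U).PosSemidef := by
    have := hB.conjTranspose_mul_mul_same U
    exact this
  have hsplit : star U * (A - B) * U = star U * A * U - star U * B * U := by
    noncomm_ring
  have key : ∀ i, |hΔ.eigenvalues i| ≤
      ((star U * A * U) i i).re + ((star U * B * U) i i).re := by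
    intro i
    have h1 : ((star U * (A - B) * U) i i) = (hΔ.eigenvalues i : ℂ) := by
      rw [hdiag]; simp
    have h2 : (hΔ.eigenvalues i : ℂ) = (star U * A * U) i i - (star U * B * U) i i := by
      rw [← h1, hsplit]; simp [Matrix.sub_apply]
    have h3 : hΔ.eigenvalues i = ((star U * A * U) i i).re - ((star U * B * U) i i).re := by
      have := congrArg Complex.re h2
      simpa using this
    have ha : 0 ≤ ((star U * A * U) i i).re := by
      have := diag_nonneg hAU i
      rw [Complex.le_def] at this; simpa using this.1
    have hb : 0 ≤ ((star U * B * U) i i).re := by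
      have := diag_nonneg hBU i
      rw [Complex.le_def] at this; simpa using this.1
    rw [h3, abs_sub_comm]
    calc |((star U * B * U) i i).re - ((star U * A * U) i i).re|
        ≤ |((star U * B * U) i i).re| + |((star U * A * U) i i).re| := abs_sub _ _
      _ = ((star U * A * U) i i).re + ((star U * B * U) i i).re := by
          rw [abs_of_nonneg ha, abs_of_nonneg hb]; ring
  calc ∑ i, |hΔ.eigenvalues i|
      ≤ ∑ i, (((star U * A * U) i i).re + ((star U * B * U) i i).re) :=
        Finset.sum_le_sum fun i _ => key i
    _ = (star U * A * U).trace.re + (star U * B * U).trace.re := by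
        rw [Finset.sum_add_distrib, Matrix.trace, Matrix.trace]
        simp [Matrix.diag, Complex.re_sum]
    _ = A.trace.re + B.trace.re := by
        have : ∀ M : Matrix (Fin n) (Fin n) ℂ, (star U * M * U).trace = M.trace := by
          intro M
          rw [Matrix.trace_mul_cycle, hUU', one_mul]
        rw [this A, this B]


lemma traceNorm_zero {n : ℕ} : traceNorm (0 : Matrix (Fin n) (Fin n) ℂ) = 0 := by
  have h0 := (frozen_sqrt_eq
    (Matrix.posSemidef_conjTranspose_mul_self (0 : Matrix (Fin n) (Fin n) ℂ)).1
    Matrix.PosSemidef.zero (by simp)).symm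
  rw [traceNorm, ← h0]
  simp

end aux

theorem doeblin_one_step_contraction {n : ℕ}
    (Φ : Matrix (Fin n) (Fin n) ℂ →ₗ[ℂ] Matrix (Fin n) (Fin n) ℂ)
    (hpos : ∀ A : Matrix (Fin n) (Fin n) ℂ, A.PosSemidef → (Φ A).PosSemidef)
    (htr : ∀ A : Matrix (Fin n) (Fin n) ℂ, (Φ A).trace = A.trace)
    (ρ₀ : Matrix (Fin n) (Fin n) ℂ) (hρ₀ : ρ₀.PosSemidef) (hρ₀tr : ρ₀.trace = 1)
    (hfix : Φ ρ₀ = ρ₀)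
    (ε : ℝ) (hε0 : 0 < ε) (hε1 : ε ≤ 1)
    (hDoeblin : ∀ ρ : Matrix (Fin n) (Fin n) ℂ, ρ.PosSemidef → ρ.trace = 1 →
      (Φ ρ - (ε : ℂ) • ρ₀).PosSemidef)
    (ρ : Matrix (Fin n) (Fin n) ℂ) (hρ : ρ.PosSemidef) (hρtr : ρ.trace = 1) :
    traceNorm (Φ ρ - ρ₀) ≤ (1 - ε) * traceNorm (ρ - ρ₀) := by
  have hΔ : (ρ - ρ₀).IsHermitian := hρ.1.sub hρ₀.1
  set lam := hΔ.eigenvalues with hlam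
  set U : Matrix (Fin n) (Fin n) ℂ := (hΔ.eigenvectorUnitary : Matrix (Fin n) (Fin n) ℂ) with hU
  have hUstar : star U = Uᴴ := rfl
  set t : ℝ := ∑ i, max (lam i) 0 with ht
  have ht0 : 0 ≤ t := Finset.sum_nonneg fun i _ => le_max_right _ _
  have htrace0 : (ρ - ρ₀).trace = 0 := by
    rw [Matrix.trace_sub, hρtr, hρ₀tr, sub_self]
  have hsum0 : ∑ i, lam i = 0 := by
    have h1 := (trace_eq_sum_eigenvalues hΔ).symm.trans htrace0
    exact_mod_cast h1
  have hsumneg : ∑ i, max (-lam i) 0 = t := by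
    have h2 : ∑ i, (max (lam i) 0 - max (-lam i) 0) = 0 := by
      simp only [max_zero_sub_max_neg_zero_eq_self]
      exact hsum0
    rw [Finset.sum_sub_distrib] at h2
    rw [ht]; linarith
  have habs : ∀ x : ℝ, |x| = max x 0 + max (-x) 0 := by
    intro x
    rcases le_total x 0 with h | h
    · rw [abs_of_nonpos h, max_eq_right h, max_eq_left (neg_nonneg.mpr h), zero_add]
    · rw [abs_of_nonneg h, max_eq_left h, max_eq_right (neg_nonpos.mpr h), add_zero]
  have htn : traceNorm (ρ - ρ₀) = 2 * t := by
    rw [traceNorm_herm hΔ]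
    calc ∑ i, |lam i| = ∑ i, (max (lam i) 0 + max (-lam i) 0) := by
          exact Finset.sum_congr rfl fun i _ => habs (lam i)
      _ = t + t := by rw [Finset.sum_add_distrib, ← ht, hsumneg]
      _ = 2 * t := by ring
  set P : Matrix (Fin n) (Fin n) ℂ :=
    U * Matrix.diagonal (fun i => ((max (lam i) 0 : ℝ) : ℂ)) * star U with hPdef
  set Q : Matrix (Fin n) (Fin n) ℂ :=
    U * Matrix.diagonal (fun i => ((max (-lam i) 0 : ℝ) : ℂ)) * star U with hQdef
  have hP : P.PosSemidef := by
    rw [hPdef, hUstar]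
    exact (Matrix.posSemidef_diagonal_iff.mpr fun i =>
      Complex.zero_le_real.mpr (le_max_right _ _)).mul_mul_conjTranspose_same U
  have hQ : Q.PosSemidef := by
    rw [hQdef, hUstar]
    exact (Matrix.posSemidef_diagonal_iff.mpr fun i =>
      Complex.zero_le_real.mpr (le_max_right _ _)).mul_mul_conjTranspose_same U
  have hPQ : P - Q = ρ - ρ₀ := by
    have hd : Matrix.diagonal (fun i => ((max (lam i) 0 : ℝ) : ℂ)) -
        Matrix.diagonal (fun i => ((max (-lam i) 0 : ℝ) : ℂ)) =
        Matrix.diagonal (RCLike.ofReal ∘ lam) := by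
      ext i j
      by_cases hij : i = j
      · subst hij
        simp only [Matrix.sub_apply, Matrix.diagonal_apply_eq, Function.comp_apply]
        rw [← Complex.ofReal_sub, max_zero_sub_max_neg_zero_eq_self]
        rfl
      · simp [Matrix.sub_apply, Matrix.diagonal_apply_ne _ hij]
    rw [hPdef, hQdef]
    conv_rhs => rw [hΔ.spectral_theorem, Unitary.conjStarAlgAut_apply]
    rw [← hd]
    noncomm_ring
  have hPtr : P.trace = (t : ℂ) := by
    rw [hPdef, trace_conj hΔ.eigenvectorUnitary, Matrix.trace_diagonal, ht,
      Complex.ofReal_sum]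
  have hQtr : Q.trace = (t : ℂ) := by
    rw [hQdef, trace_conj hΔ.eigenvectorUnitary, Matrix.trace_diagonal, ← hsumneg,
      Complex.ofReal_sum]
  rcases eq_or_lt_of_le ht0 with hteq | htpos
  · -- t = 0, so ρ = ρ₀
    have hsum1 : ∑ i, max (lam i) 0 = 0 := by rw [← ht, ← hteq]
    have hsum2 : ∑ i, max (-lam i) 0 = 0 := by rw [hsumneg, ← hteq]
    have hmax1 := (Finset.sum_eq_zero_iff_of_nonneg
      (fun i _ => le_max_right (lam i) 0)).mp hsum1
    have hmax2 := (Finset.sum_eq_zero_iff_of_nonneg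
      (fun i _ => le_max_right (-lam i) 0)).mp hsum2
    have hlam0 : ∀ i, lam i = 0 := by
      intro i
      have := habs (lam i)
      rw [hmax1 i (Finset.mem_univ i), hmax2 i (Finset.mem_univ i), add_zero] at this
      exact abs_eq_zero.mp this
    have hdz : (RCLike.ofReal ∘ lam : Fin n → ℂ) = fun _ => (0 : ℂ) := by
      funext i
      simp [hlam0 i]
    have hzero : ρ - ρ₀ = 0 := by
      have := hΔ.spectral_theorem
      rw [hdz] at this
      rw [Matrix.diagonal_zero, Unitary.conjStarAlgAut_apply, mul_zero, zero_mul] at this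
      exact this
    have h1 : Φ ρ - ρ₀ = 0 := by
      rw [show ρ = ρ₀ from sub_eq_zero.mp hzero, hfix, sub_self]
    rw [h1, hzero, traceNorm_zero]
    simp
  · set σ₁ : Matrix (Fin n) (Fin n) ℂ := ((t : ℂ))⁻¹ • P with hσ₁
    set σ₂ : Matrix (Fin n) (Fin n) ℂ := ((t : ℂ))⁻¹ • Q with hσ₂
    have htne : (t : ℂ) ≠ 0 := by exact_mod_cast ne_of_gt htpos
    have hcast : ((t : ℂ))⁻¹ = (((t⁻¹ : ℝ)) : ℂ) := by push_cast; ring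
    have hσ₁psd : σ₁.PosSemidef := by rw [hσ₁, hcast]; exact psd_smul hP (inv_nonneg.mpr ht0)
    have hσ₂psd : σ₂.PosSemidef := by rw [hσ₂, hcast]; exact psd_smul hQ (inv_nonneg.mpr ht0)
    have hσ₁tr : σ₁.trace = 1 := by
      rw [hσ₁, Matrix.trace_smul, hPtr, smul_eq_mul, inv_mul_cancel₀ htne]
    have hσ₂tr : σ₂.trace = 1 := by
      rw [hσ₂, Matrix.trace_smul, hQtr, smul_eq_mul, inv_mul_cancel₀ htne]
    have hD1 := hDoeblin σ₁ hσ₁psd hσ₁tr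
    have hD2 := hDoeblin σ₂ hσ₂psd hσ₂tr
    set A' : Matrix (Fin n) (Fin n) ℂ := Φ P - (((ε * t : ℝ)) : ℂ) • ρ₀ with hA'def
    set B' : Matrix (Fin n) (Fin n) ℂ := Φ Q - (((ε * t : ℝ)) : ℂ) • ρ₀ with hB'def
    have hA'eq : A' = (t : ℂ) • (Φ σ₁ - (ε : ℂ) • ρ₀) := by
      rw [hA'def, hσ₁, _root_.map_smul, smul_sub, smul_smul, smul_smul, mul_inv_cancel₀ htne, one_smul]
      push_cast
      ring_nf
    have hB'eq : B' = (t : ℂ) • (Φ σ₂ - (ε : ℂ) • ρ₀) := by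
      rw [hB'def, hσ₂, _root_.map_smul, smul_sub, smul_smul, smul_smul, mul_inv_cancel₀ htne, one_smul]
      push_cast
      ring_nf
    have hA' : A'.PosSemidef := by rw [hA'eq]; exact psd_smul hD1 ht0
    have hB' : B'.PosSemidef := by rw [hB'eq]; exact psd_smul hD2 ht0
    have hdiff : A' - B' = Φ ρ - ρ₀ := by
      have : A' - B' = Φ P - Φ Q := by rw [hA'def, hB'def]; abel
      rw [this, ← map_sub, hPQ, map_sub, hfix]
    have hA'tr : A'.trace.re = t - ε * t := by
      rw [hA'def, Matrix.trace_sub, Matrix.trace_smul, htr, hPtr, hρ₀tr, smul_eq_mul, mul_one]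
      push_cast
      simp
    have hB'tr : B'.trace.re = t - ε * t := by
      rw [hB'def, Matrix.trace_sub, Matrix.trace_smul, htr, hQtr, hρ₀tr, smul_eq_mul, mul_one]
      push_cast
      simp
    calc traceNorm (Φ ρ - ρ₀) = traceNorm (A' - B') := by rw [hdiff]
      _ ≤ A'.trace.re + B'.trace.re := traceNorm_sub_psd_le hA' hB'
      _ = (1 - ε) * (2 * t) := by rw [hA'tr, hB'tr]; ring
      _ = (1 - ε) * traceNorm (ρ - ρ₀) := by rw [htn]
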